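/- In ZF, for every infinite set X, the space (P(X), τ_P[[X]^{<ω}]) is not a P-space; consequently the Cantor cube 2^X (with the product topology) is not a P-space. -/

import Mathlib

open Set

def BSet {X : Type*} (A : Set (Set X)) (x z : Set X) : Set ↥A :=
  {y : ↥A | x ⊆ (y : Set X) ∧ (y : Set X) ∩ z = ∅}

def tau {X : Type*} (A Z : Set (Set X)) : TopologicalSpace ↥A :=
  TopologicalSpace.generateFrom
    {S | ∃ x ∈ A, ∃ z ∈ Z, x ∩ z = ∅ ∧ S = BSet A x z}

def IsPSpace {α : Type*} (t : TopologicalSpace α) : Prop :=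
  ∀ U : ℕ → Set α, (∀ n, t.IsOpen (U n)) → t.IsOpen (⋂ n, U n)

def tauP {X : Type*} (Z : Set (Set X)) : TopologicalSpace (Set X) :=
  TopologicalSpace.generateFrom
    {S | ∃ x z : Set X, z ∈ Z ∧ x ∩ z = ∅ ∧ S = {y : Set X | x ⊆ y ∧ y ∩ z = ∅}}

lemma tauP_empty_mem {X : Type*} {S : Set (Set X)}
    (h : (tauP {s : Set X | s.Finite}).IsOpen S) (hS : (∅ : Set X) ∈ S) :
    ∃ z : Set X, z.Finite ∧ {y : Set X | y ∩ z = ∅} ⊆ S := by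
  induction h with
  | basic S hSmem =>
    obtain ⟨x, z, hz, hxz, rfl⟩ := hSmem
    have hx : x = ∅ := subset_empty_iff.mp hS.1
    exact ⟨z, hz, fun y hy => ⟨hx ▸ empty_subset y, hy⟩⟩
  | univ => exact ⟨∅, finite_empty, fun _ _ => trivial⟩
  | inter S T _ _ ihS ihT =>
    obtain ⟨z1, hz1, h1⟩ := ihS hS.1
    obtain ⟨z2, hz2, h2⟩ := ihT hS.2
    refine ⟨z1 ∪ z2, hz1.union hz2, fun y hy => ?_⟩
    rw [mem_setOf_eq, inter_union_distrib_left, union_empty_iff] at hy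
    exact ⟨h1 hy.1, h2 hy.2⟩
  | sUnion 𝒮 _ ih =>
    obtain ⟨T, hT, hT'⟩ := hS
    obtain ⟨z, hz, h⟩ := ih T hT hT'
    exact ⟨z, hz, fun y hy => ⟨T, hT, h hy⟩⟩

theorem tauP_finite_not_pspace {X : Type*} [Infinite X] :
    ¬ IsPSpace (tauP {s : Set X | s.Finite}) ∧
    ¬ IsPSpace (inferInstance : TopologicalSpace (X → Bool)) := by
  obtain ⟨a, ha⟩ := Infinite.natEmbedding X
  constructor
  · intro hP
    set U : ℕ → Set (Set X) := fun n => {y : Set X | y ∩ {a n} = ∅} with hU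
    have hopen : ∀ n, (tauP {s : Set X | s.Finite}).IsOpen (U n) := by
      intro n
      exact TopologicalSpace.GenerateOpen.basic _
        ⟨∅, {a n}, finite_singleton _, empty_inter _, by
          ext y; simp [hU]⟩
    have hmem : (∅ : Set X) ∈ ⋂ n, U n := by
      simp [hU]
    obtain ⟨z, hz, hsub⟩ := tauP_empty_mem (hP U hopen) hmem
    have hfin : {n : ℕ | a n ∈ z}.Finite := hz.preimage (ha.injOn)
    obtain ⟨n, hn⟩ := hfin.infinite_compl.nonempty
    have : ({a n} : Set X) ∈ ⋂ m, U m := by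
      apply hsub
      simp only [mem_setOf_eq, singleton_inter_eq_empty]
      exact hn
    have := mem_iInter.mp this n
    simp [hU] at this
  · classical
    intro hP
    set U : ℕ → Set (X → Bool) := fun n => {f | f (a n) = false} with hU
    have hopen : ∀ n, IsOpen (U n) := by
      intro n
      have h : U n = (fun f : X → Bool => f (a n)) ⁻¹' {false} := rfl
      rw [h]
      exact (continuous_apply (a n)).isOpen_preimage _ (isOpen_discrete _)
    have hmem : (fun _ => false : X → Bool) ∈ ⋂ n, U n := by simp [hU]
    obtain ⟨I, u, hu, hsub⟩ := isOpen_pi_iff.mp (hP U hopen) _ hmem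
    have hfin : {n : ℕ | a n ∈ I}.Finite := I.finite_toSet.preimage ha.injOn
    obtain ⟨n, hn⟩ := hfin.infinite_compl.nonempty
    set g : X → Bool := fun x => if x = a n then true else false with hg
    have hgmem : g ∈ ⋂ m, U m := by
      apply hsub
      intro i hi
      have : g i = false := if_neg fun h => hn (by simpa [h] using hi)
      rw [this]
      exact (hu i hi).2
    have := mem_iInter.mp hgmem n
    simp [hU, hg] at this
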